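/- For every integer n ≥ 0, the following identity holds in ℚ: S₂(n) = −2^{2n+1} · 3^{4n+2} · (1/2 − n)_{2n+1} · Σ_{k=0}^{2n+1} [ (−2n−1)_k · (n + 3/2)_k / ( (1/2 − n)_k · k! ) ] · (1/9)^k. -/

import Mathlib

open Finset

/-- The rising factorial `(a)_k = a(a+1)⋯(a+k-1)`, with `(a)_0 = 1`. -/
def risingFactorial (a : ℚ) (k : ℕ) : ℚ := ∏ i ∈ range k, (a + i)

/-- `S₂(n) = Σ_{k=0}^{2n+1} C(2n+1,k)·(∏_{j=1}^{2n+1}(6n-2k+5-2j))·(-1)^k·3^(2k)`. -/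
def S₂ (n : ℕ) : ℤ :=
  ∑ k ∈ range (2 * n + 2), ((2 * n + 1).choose k : ℤ) *
    (∏ j ∈ Icc 1 (2 * n + 1), (6 * (n : ℤ) - 2 * (k : ℤ) + 5 - 2 * (j : ℤ))) *
    (-1) ^ k * 3 ^ (2 * k)

lemma rF_succ (a : ℚ) (k : ℕ) :
    risingFactorial a (k + 1) = risingFactorial a k * (a + k) := by
  simp [risingFactorial, Finset.prod_range_succ]

lemma rF_add (a : ℚ) (j k : ℕ) :
    risingFactorial a (j + k) = risingFactorial a j * risingFactorial (a + j) k := by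
  unfold risingFactorial
  rw [Finset.prod_range_add]
  congr 1
  refine Finset.prod_congr rfl fun i _ => ?_
  push_cast; ring

lemma rF_half_ne_zero (n k : ℕ) : risingFactorial ((1/2 : ℚ) - n) k ≠ 0 := by
  unfold risingFactorial
  refine Finset.prod_ne_zero_iff.2 fun i _ h => ?_
  have h2 : (1 : ℚ) + 2 * i = 2 * n := by linarith
  have : ((1 + 2 * i : ℕ) : ℚ) = ((2 * n : ℕ) : ℚ) := by push_cast; linarith
  have := Nat.cast_injective this
  omega

lemma rF_neg (N m : ℕ) (h : m ≤ N) :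
    risingFactorial (-(N : ℚ)) m = (-1) ^ m * (N.descFactorial m : ℚ) := by
  induction m with
  | zero => simp [risingFactorial]
  | succ j ih =>
    rw [rF_succ, ih (le_of_lt (Nat.lt_of_succ_le h)), Nat.descFactorial_succ]
    have hj : j < N := Nat.lt_of_succ_le h
    push_cast [Nat.cast_sub (le_of_lt hj)]
    ring

lemma key (C P R R1 R2 S a b c q : ℚ) (h4 : R1 * R2 = R)
    (ha : a ≠ 0) (hb : b ≠ 0) (hc : c ≠ 0) :
    C * (P * R) * S * q
      = -P * (q * c) * (a * R1) * (-S * (b * C) * R2 / (a * b) * c⁻¹) := by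
  field_simp
  linear_combination (-(C * P * S * q)) * h4

lemma prod_Icc_eq (n k : ℕ) :
    ∏ j ∈ Icc 1 (2*n+1), (6*(n:ℚ) - 2*(k:ℚ) + 5 - 2*(j:ℚ))
      = 2^(2*n+1) * risingFactorial ((n:ℚ) + 3/2 - k) (2*n+1) := by
  rw [← Finset.Ico_add_one_right_eq_Icc, Finset.prod_Ico_eq_prod_range]
  have h1 : 2*n+1+1-1 = 2*n+1 := by omega
  rw [h1, ← Finset.prod_range_reflect, risingFactorial]
  rw [show (2:ℚ)^(2*n+1) * ∏ i ∈ range (2*n+1), ((n:ℚ) + 3/2 - k + i)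
      = ∏ i ∈ range (2*n+1), 2*((n:ℚ) + 3/2 - k + i) by
    rw [Finset.prod_mul_distrib, Finset.prod_const, card_range]]
  refine Finset.prod_congr rfl fun j hj => ?_
  have hj' : j ≤ 2*n := by simpa using Nat.lt_succ_iff.mp (mem_range.mp hj)
  have : 1 + (2*n+1-1-j) = 1 + (2*n - j) := by omega
  rw [this]
  push_cast [Nat.cast_sub hj']
  ring

/-- The hypergeometric expression of `S₂`:
`S₂(n) = -2^(2n+1)·3^(4n+2)·(1/2-n)_{2n+1} ·
  Σ_{k=0}^{2n+1} ((-2n-1)_k (n+3/2)_k / ((1/2-n)_k k!)) (1/9)^k`. -/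
theorem stmt_9 (n : ℕ) :
    (S₂ n : ℚ) = -(2 ^ (2 * n + 1)) * 3 ^ (4 * n + 2)
      * risingFactorial ((1 / 2 : ℚ) - n) (2 * n + 1)
      * ∑ k ∈ range (2 * n + 2),
          risingFactorial (-2 * (n : ℚ) - 1) k * risingFactorial ((n : ℚ) + 3 / 2) k
            / (risingFactorial ((1 / 2 : ℚ) - n) k * (Nat.factorial k : ℚ))
            * (1 / 9 : ℚ) ^ k := by
  unfold S₂
  push_cast
  rw [← Finset.sum_range_reflect (fun k => risingFactorial (-2 * (n : ℚ) - 1) k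
      * risingFactorial ((n : ℚ) + 3 / 2) k
      / (risingFactorial ((1 / 2 : ℚ) - n) k * (Nat.factorial k : ℚ)) * (1 / 9 : ℚ) ^ k)
      (2 * n + 2), Finset.mul_sum]
  refine Finset.sum_congr rfl fun k hk => ?_
  have hk' : k ≤ 2 * n + 1 := by have := mem_range.mp hk; omega
  rw [show 2 * n + 2 - 1 - k = 2 * n + 1 - k from by omega]
  set m := 2 * n + 1 - k with hmdef
  have hkm : k + m = 2 * n + 1 := by omega
  have hmc : (m : ℚ) = 2 * n + 1 - k := by rw [hmdef]; push_cast [Nat.cast_sub hk']; ring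
  rw [prod_Icc_eq]
  rw [show (-2 * (n:ℚ) - 1) = -(((2*n+1 : ℕ)):ℚ) from by push_cast; ring,
    rF_neg (2*n+1) m (by omega), Nat.descFactorial_eq_factorial_mul_choose,
    Nat.choose_symm hk']
  have h3 : risingFactorial ((1/2:ℚ) - n) (2*n+1)
      = risingFactorial ((1/2:ℚ) - n) m * risingFactorial ((n:ℚ) + 3/2 - k) k := by
    rw [← hkm, add_comm k m, rF_add]
    rw [show ((1/2:ℚ) - n + m) = (n:ℚ) + 3/2 - k from by rw [hmc]; ring]
  have h4 : risingFactorial ((n:ℚ) + 3/2 - k) k * risingFactorial ((n:ℚ) + 3/2) m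
      = risingFactorial ((n:ℚ) + 3/2 - k) (2*n+1) := by
    rw [← hkm, rF_add, show ((n:ℚ) + 3/2 - k + k) = (n:ℚ) + 3/2 from by ring]
  have hsign : (-1:ℚ)^m = -(-1:ℚ)^k := by
    have h2 : (-1:ℚ)^k * (-1:ℚ)^m = -1 := by
      rw [← pow_add, hkm]; exact Odd.neg_one_pow ⟨n, by ring⟩
    have hk2 : (-1:ℚ)^k * (-1:ℚ)^k = 1 := by
      rw [← pow_add]; exact Even.neg_one_pow ⟨k, rfl⟩
    calc (-1:ℚ)^m = ((-1:ℚ)^k * (-1:ℚ)^k) * (-1:ℚ)^m := by rw [hk2, one_mul]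
      _ = (-1:ℚ)^k * ((-1:ℚ)^k * (-1:ℚ)^m) := by ring
      _ = -(-1:ℚ)^k := by rw [h2]; ring
  have h9 : (3:ℚ)^(4*n+2) = 9^k * 9^m := by
    rw [show 4*n+2 = 2*(k+m) from by omega, pow_mul, ← pow_add]; norm_num
  have h3k : (3:ℚ)^(2*k) = 9^k := by rw [pow_mul]; norm_num
  rw [h3, hsign, h9, h3k]
  have hnz1 := rF_half_ne_zero n m
  have hnz2 : ((m.factorial : ℚ)) ≠ 0 := Nat.cast_ne_zero.mpr m.factorial_ne_zero
  have h19 : ((1:ℚ)/9)^m = (9^m)⁻¹ := by rw [one_div, inv_pow]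
  rw [h19]
  have h9m : (9:ℚ)^m ≠ 0 := pow_ne_zero _ (by norm_num)
  push_cast
  exact key _ _ _ _ _ _ _ _ _ _ h4 hnz1 hnz2 h9m
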